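/- Let a, a' ∈ ℝ^n, b' ∈ ℝ, l ∈ ℝ^n with l ≥ 0, and ∼, ∼' ∈ {≤, <}. Let X_∼ := {x ∈ ℝ^n : x ≥ l ∧ a·x ∼ 0} and Y_∼' := {x ∈ ℝ^n : a'·x ∼' b'}, and suppose X_∼ ≠ ∅. Then X_∼ ⊆ Y_∼' if and only if there exists λ ≥ 0 such that λa ≥ a' (componentwise) and one of the following holds: (1) ∼' is ≤ and −b' ≤ (λa − a')·l; (2) ∼ is ≤, ∼' is <, and −b' < (λa − a')·l; (3) ∼ is <, ∼' is <, and either −b' < (λa − a')·l, or both −b' = (λa − a')·l and λ > 0. -/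

import Mathlib

open Matrix

/-- `rel strict x y` is `x < y` if `strict`, and `x ≤ y` otherwise. -/
def rel (strict : Bool) (x y : ℝ) : Prop := if strict then x < y else x ≤ y

lemma rel_false {x y : ℝ} : rel false x y ↔ x ≤ y := by simp [rel]

lemma rel_true {x y : ℝ} : rel true x y ↔ x < y := by simp [rel]

lemma rel_le {s : Bool} {x y : ℝ} (h : rel s x y) : x ≤ y := by
  cases s with
  | false => simpa [rel] using h
  | true => exact le_of_lt (by simpa [rel] using h)

lemma rel_mono {s : Bool} {x y z : ℝ} (h : rel s x y) (hz : z ≤ x) : rel s z y := by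
  cases s <;> simp [rel] at h ⊢ <;> linarith

lemma rel_of_lt {s : Bool} {x y : ℝ} (h : x < y) : rel s x y := by
  cases s with
  | false => simpa [rel] using h.le
  | true => simpa [rel] using h

lemma tool1 {s' : Bool} {u v b : ℝ} (h : ∀ t : ℝ, 0 ≤ t → rel s' (u + t * v) b) :
    v ≤ 0 := by
  by_contra hv
  push_neg at hv
  set t : ℝ := max 0 ((b + 1 - u) / v) with ht
  have h1 : (b + 1 - u) / v ≤ t := le_max_right _ _
  have h2 : b + 1 - u ≤ t * v := by
    have := (div_le_iff₀ hv).mp h1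
    linarith
  have h3 := rel_le (h t (le_max_left _ _))
  linarith

lemma tool2 {u v b : ℝ} (h : ∀ t : ℝ, 0 < t → t < 1 → u + t * v ≤ b) : u ≤ b := by
  by_contra hb
  push_neg at hb
  have hpos : (0:ℝ) < 2 * (|v| + 1) := by positivity
  set t : ℝ := min (1/2) ((u - b) / (2 * (|v| + 1))) with htdef
  have ht0 : 0 < t := lt_min (by norm_num) (div_pos (by linarith) hpos)
  have ht1 : t < 1 := lt_of_le_of_lt (min_le_left _ _) (by norm_num)
  have h1 := h t ht0 ht1
  have h2 : t ≤ (u - b) / (2 * (|v| + 1)) := min_le_right _ _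
  have h5 : t * (2 * (|v| + 1)) ≤ u - b := (le_div_iff₀ hpos).mp h2
  have h4 : -(t * v) ≤ t * |v| := by
    have := neg_abs_le v
    nlinarith [ht0.le]
  nlinarith [abs_nonneg v, ht0]

lemma dot_mono {n : ℕ} {w u v : Fin n → ℝ} (hw : 0 ≤ w) (h : u ≤ v) :
    w ⬝ᵥ u ≤ w ⬝ᵥ v := by
  simp only [dotProduct]
  exact Finset.sum_le_sum fun i _ => mul_le_mul_of_nonneg_left (h i) (hw i)

lemma exists_neg_comp {n : ℕ} {a d : Fin n → ℝ} (hd : 0 ≤ d) (h : a ⬝ᵥ d < 0) :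
    ∃ j, a j < 0 := by
  by_contra hc
  push_neg at hc
  have : 0 ≤ a ⬝ᵥ d := by
    simp only [dotProduct]
    exact Finset.sum_nonneg fun i _ => mul_nonneg (hc i) (hd i)
  linarith

lemma exists_lam0 {n : ℕ} (a a' : Fin n → ℝ) :
    ∃ lam0 : ℝ, 0 ≤ lam0 ∧ (∀ i, 0 < a i → a' i ≤ lam0 * a i) ∧
      (0 < lam0 → ∃ k, 0 < a k ∧ a' k = lam0 * a k) := by
  classical
  set f : Fin n → ℝ := fun i => if 0 < a i then a' i / a i else 0 with hf
  set F : Finset ℝ := insert 0 (Finset.univ.image f) with hF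
  have hFne : F.Nonempty := ⟨0, Finset.mem_insert_self 0 _⟩
  refine ⟨F.max' hFne, Finset.le_max' F 0 (Finset.mem_insert_self 0 _), ?_, ?_⟩
  · intro i hi
    have h1 : f i ≤ F.max' hFne :=
      Finset.le_max' F (f i)
        (Finset.mem_insert_of_mem (Finset.mem_image_of_mem f (Finset.mem_univ i)))
    have h2 : f i = a' i / a i := by simp only [hf, if_pos hi]
    rw [h2] at h1
    exact (div_le_iff₀ hi).mp h1
  · intro h0
    have hmem := Finset.max'_mem F hFne
    rcases Finset.mem_insert.mp hmem with h | h
    · exact absurd h (by linarith)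
    · obtain ⟨k, -, hk⟩ := Finset.mem_image.mp h
      by_cases hak : 0 < a k
      · refine ⟨k, hak, ?_⟩
        simp only [hf, if_pos hak] at hk
        exact (div_eq_iff (ne_of_gt hak)).mp hk
      · exfalso
        simp only [hf, if_neg hak] at hk
        linarith [hk]

lemma exists_lammin {n : ℕ} (a a' : Fin n → ℝ) {j : Fin n} (hj : a j < 0) :
    ∃ (k : Fin n) (lam : ℝ), a k < 0 ∧ a' k = lam * a k ∧
      ∀ i, a i < 0 → a' i ≤ lam * a i := by
  classical
  set T : Finset (Fin n) := Finset.univ.filter (fun i => a i < 0) with hT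
  have hTne : T.Nonempty := ⟨j, by simp [hT, hj]⟩
  obtain ⟨k, hkmem, hkmin⟩ := T.exists_min_image (fun i => a' i / a i) hTne
  have hk : a k < 0 := by simpa [hT] using hkmem
  refine ⟨k, a' k / a k, hk, by rw [div_mul_cancel₀ _ (ne_of_lt hk)], ?_⟩
  intro i hi
  have h1 : a' k / a k ≤ a' i / a i := hkmin i (by simp [hT, hi])
  exact (le_div_iff_of_neg hi).mp h1
/-- For `∼, ∼' ∈ {≤, <}` (encoded as Booleans, `true` meaning `<`), `l ≥ 0` and
nonempty `X_∼ = {x : x ≥ l ∧ a·x ∼ 0}`, one has `X_∼ ⊆ Y_∼'` iff there is `λ ≥ 0`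
with `λa ≥ a'` and one of three side conditions depending on `∼` and `∼'`. -/
theorem subset_iff_exists_lambda_cases
    {n : ℕ} (a a' : Fin n → ℝ) (b' : ℝ) (l : Fin n → ℝ) (hl : 0 ≤ l)
    (s s' : Bool)
    (hX : ∃ x : Fin n → ℝ, l ≤ x ∧ rel s (a ⬝ᵥ x) 0) :
    {x : Fin n → ℝ | l ≤ x ∧ rel s (a ⬝ᵥ x) 0} ⊆
        {x : Fin n → ℝ | rel s' (a' ⬝ᵥ x) b'} ↔
      ∃ lam : ℝ, 0 ≤ lam ∧ a' ≤ lam • a ∧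
        ((s' = false ∧ -b' ≤ (lam • a - a') ⬝ᵥ l) ∨
          (s = false ∧ s' = true ∧ -b' < (lam • a - a') ⬝ᵥ l) ∨
          (s = true ∧ s' = true ∧
            (-b' < (lam • a - a') ⬝ᵥ l ∨
              (-b' = (lam • a - a') ⬝ᵥ l ∧ 0 < lam)))) := by
  have hval : ∀ lam : ℝ, (lam • a - a') ⬝ᵥ l = lam * (a ⬝ᵥ l) - a' ⬝ᵥ l := fun lam => by
    rw [sub_dotProduct, smul_dotProduct, smul_eq_mul]
  constructor
  · -- forward direction
    intro hsub
    obtain ⟨x₀, hx₀l, hx₀r⟩ := hX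
    -- moving from a feasible point along a nonnegative direction
    have key : ∀ (x d : Fin n → ℝ) (t : ℝ), l ≤ x → 0 ≤ d → 0 ≤ t →
        rel s (a ⬝ᵥ x + t * (a ⬝ᵥ d)) 0 → rel s' (a' ⬝ᵥ x + t * (a' ⬝ᵥ d)) b' := by
      intro x d t hx hd ht hrel
      have hdot : ∀ w : Fin n → ℝ, w ⬝ᵥ (x + t • d) = w ⬝ᵥ x + t * (w ⬝ᵥ d) := fun w => by
        rw [dotProduct_add, dotProduct_smul, smul_eq_mul]
      have hle : l ≤ x + t • d := by
        refine le_trans hx (Pi.le_def.mpr fun i => ?_)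
        have : 0 ≤ t * d i := mul_nonneg ht (hd i)
        simpa using by linarith [this]
      have hmem : x + t • d ∈ {x : Fin n → ℝ | l ≤ x ∧ rel s (a ⬝ᵥ x) 0} :=
        ⟨hle, by rw [hdot]; exact hrel⟩
      have := hsub hmem
      rw [Set.mem_setOf_eq, hdot] at this
      exact this
    have dir : ∀ d : Fin n → ℝ, 0 ≤ d → a ⬝ᵥ d ≤ 0 → a' ⬝ᵥ d ≤ 0 := by
      intro d hd had
      refine tool1 (s' := s') (b := b') (u := a' ⬝ᵥ x₀) fun t ht => ?_
      refine key x₀ d t hx₀l hd ht (rel_mono hx₀r ?_)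
      nlinarith
    have hsingle : ∀ j : Fin n, a j ≤ 0 → a' j ≤ 0 := by
      intro j hj
      have h1 : (0 : Fin n → ℝ) ≤ Pi.single j 1 := Pi.single_nonneg.mpr zero_le_one
      have h2 : a ⬝ᵥ Pi.single j 1 ≤ 0 := by rw [dotProduct_single, mul_one]; exact hj
      have := dir _ h1 h2
      rwa [dotProduct_single, mul_one] at this
    obtain ⟨lam0, hlam00, hposcomp, hwit⟩ := exists_lam0 a a'
    have hneglam0 : ∀ i, a i < 0 → a' i ≤ lam0 * a i := by
      intro i hi
      rcases eq_or_lt_of_le hlam00 with h0 | h0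
      · rw [← h0, zero_mul]; exact hsingle i hi.le
      · obtain ⟨k, hak, ha'k⟩ := hwit h0
        have hd : (0 : Fin n → ℝ) ≤ Pi.single k (-(a i)) + Pi.single i (a k) :=
          add_nonneg (Pi.single_nonneg.mpr (by linarith)) (Pi.single_nonneg.mpr hak.le)
        have had : a ⬝ᵥ (Pi.single k (-(a i)) + Pi.single i (a k)) ≤ 0 := by
          rw [dotProduct_add, dotProduct_single, dotProduct_single]; nlinarith
        have h3 := dir _ hd had
        rw [dotProduct_add, dotProduct_single, dotProduct_single, ha'k] at h3
        nlinarith [h3, hak]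
    have hfeas0 : a' ≤ lam0 • a := by
      refine Pi.le_def.mpr fun i => ?_
      have : (lam0 • a) i = lam0 * a i := by simp [smul_eq_mul]
      rw [this]
      rcases lt_trichotomy (a i) 0 with h | h | h
      · exact hneglam0 i h
      · rw [h, mul_zero]; exact hsingle i h.le
      · exact hposcomp i h
    have hfeasgen : ∀ lam : ℝ, lam0 ≤ lam → (∀ i, a i < 0 → a' i ≤ lam * a i) →
        a' ≤ lam • a := by
      intro lam hge hneg
      refine Pi.le_def.mpr fun i => ?_
      have heq : (lam • a) i = lam * a i := by simp [smul_eq_mul]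
      rw [heq]
      rcases lt_trichotomy (a i) 0 with h | h | h
      · exact hneg i h
      · rw [h, mul_zero]; exact hsingle i h.le
      · have h1 := hposcomp i h
        have h2 : lam0 * a i ≤ lam * a i := mul_le_mul_of_nonneg_right hge h.le
        linarith
    rcases lt_trichotomy (a ⬝ᵥ l) 0 with hc | hc | hc
    · -- c < 0 : l itself is (strictly) feasible
      have hHl : rel s' (a' ⬝ᵥ l) b' := hsub ⟨le_refl l, rel_of_lt hc⟩
      rcases eq_or_lt_of_le hlam00 with h0 | h0
      · -- lam0 = 0
        refine ⟨lam0, hlam00, hfeas0, ?_⟩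
        have hDval : (lam0 • a - a') ⬝ᵥ l = -(a' ⬝ᵥ l) := by rw [hval, ← h0]; ring
        cases s' with
        | false => exact Or.inl ⟨rfl, by rw [hDval]; linarith [rel_le hHl]⟩
        | true =>
          have hlt : a' ⬝ᵥ l < b' := by simpa [rel] using hHl
          cases s with
          | false => exact Or.inr (Or.inl ⟨rfl, rfl, by rw [hDval]; linarith⟩)
          | true => exact Or.inr (Or.inr ⟨rfl, rfl, Or.inl (by rw [hDval]; linarith)⟩)
      · -- lam0 > 0 with witness k
        obtain ⟨k, hak, ha'k⟩ := hwit h0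
        have hakne : a k ≠ 0 := ne_of_gt hak
        set t0 : ℝ := (-(a ⬝ᵥ l)) / a k with ht0def
        have ht0pos : 0 < t0 := div_pos (by linarith) hak
        have hptt : ∀ t : ℝ, 0 ≤ t → rel s (a ⬝ᵥ l + t * a k) 0 →
            rel s' (a' ⬝ᵥ l + t * a' k) b' := by
          intro t ht hr
          have h1 := key l (Pi.single k 1) t (le_refl l)
            (Pi.single_nonneg.mpr zero_le_one) ht
            (by rwa [dotProduct_single, mul_one])
          rwa [dotProduct_single, mul_one] at h1
        have hsum : a ⬝ᵥ l + t0 * a k = 0 := by rw [ht0def]; field_simp; ring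
        have hkey2 : a' ⬝ᵥ l + t0 * a' k = a' ⬝ᵥ l - lam0 * (a ⬝ᵥ l) := by
          rw [ha'k, ht0def]; field_simp; ring
        cases s with
        | false =>
          have hH := hptt t0 ht0pos.le (by rw [hsum]; simp [rel])
          rw [hkey2] at hH
          refine ⟨lam0, hlam00, hfeas0, ?_⟩
          cases s' with
          | false => exact Or.inl ⟨rfl, by rw [hval]; linarith [rel_le hH]⟩
          | true =>
            have hlt : a' ⬝ᵥ l - lam0 * (a ⬝ᵥ l) < b' := by simpa [rel] using hH
            exact Or.inr (Or.inl ⟨rfl, rfl, by rw [hval]; linarith⟩)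
        | true =>
          have hub : a' ⬝ᵥ l - lam0 * (a ⬝ᵥ l) ≤ b' := by
            apply tool2 (v := lam0 * (a ⬝ᵥ l))
            intro ε hε0 hε1
            have hfe : rel true (a ⬝ᵥ l + ((1 - ε) * t0) * a k) 0 := by
              have heq3 : a ⬝ᵥ l + ((1 - ε) * t0) * a k = ε * (a ⬝ᵥ l) := by
                rw [ht0def]; field_simp; ring
              rw [heq3]
              simp only [rel, if_pos rfl]
              exact mul_neg_of_pos_of_neg hε0 hc
            have hH := hptt ((1 - ε) * t0) (by nlinarith) hfe
            have heq4 : a' ⬝ᵥ l + ((1 - ε) * t0) * a' k =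
                (a' ⬝ᵥ l - lam0 * (a ⬝ᵥ l)) + ε * (lam0 * (a ⬝ᵥ l)) := by
              rw [ha'k, ht0def]; field_simp; ring
            rw [heq4] at hH
            exact rel_le hH
          refine ⟨lam0, hlam00, hfeas0, ?_⟩
          cases s' with
          | false => exact Or.inl ⟨rfl, by rw [hval]; linarith⟩
          | true =>
            rcases eq_or_lt_of_le hub with he | hlt
            · exact Or.inr (Or.inr ⟨rfl, rfl, Or.inr ⟨by rw [hval]; linarith, h0⟩⟩)
            · exact Or.inr (Or.inr ⟨rfl, rfl, Or.inl (by rw [hval]; linarith)⟩)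
    · -- c = 0
      cases s with
      | false =>
        have hHl : rel s' (a' ⬝ᵥ l) b' :=
          hsub ⟨le_refl l, by simp [rel, hc]⟩
        refine ⟨lam0, hlam00, hfeas0, ?_⟩
        have hDval : (lam0 • a - a') ⬝ᵥ l = -(a' ⬝ᵥ l) := by rw [hval, hc]; ring
        cases s' with
        | false => exact Or.inl ⟨rfl, by rw [hDval]; linarith [rel_le hHl]⟩
        | true =>
          have hlt : a' ⬝ᵥ l < b' := by simpa [rel] using hHl
          exact Or.inr (Or.inl ⟨rfl, rfl, by rw [hDval]; linarith⟩)
      | true =>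
        have hx0lt : a ⬝ᵥ x₀ < 0 := by simpa [rel] using hx₀r
        have hdneg : a ⬝ᵥ (x₀ - l) < 0 := by rw [dotProduct_sub]; linarith
        obtain ⟨j, hj⟩ := exists_neg_comp (sub_nonneg.mpr hx₀l) hdneg
        have hal : a' ⬝ᵥ l ≤ b' := by
          apply tool2 (v := a' ⬝ᵥ (x₀ - l))
          intro t ht0 ht1
          have hfe : rel true (a ⬝ᵥ l + t * (a ⬝ᵥ (x₀ - l))) 0 := by
            simp only [rel, if_pos rfl]
            rw [hc, zero_add]
            exact mul_neg_of_pos_of_neg ht0 hdneg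
          exact rel_le (key l (x₀ - l) t (le_refl l) (sub_nonneg.mpr hx₀l) ht0.le hfe)
        cases s' with
        | false =>
          refine ⟨lam0, hlam00, hfeas0, Or.inl ⟨rfl, ?_⟩⟩
          rw [hval, hc, mul_zero]; linarith
        | true =>
          rcases lt_or_eq_of_le hal with hlt | heq
          · refine ⟨lam0, hlam00, hfeas0, Or.inr (Or.inr ⟨rfl, rfl, Or.inl ?_⟩)⟩
            rw [hval, hc, mul_zero]; linarith
          · have hjneg : ∀ i, a i < 0 → a' i < 0 := by
              intro i hi
              have hfe : rel true (a ⬝ᵥ l + 1 * (a ⬝ᵥ Pi.single i 1)) 0 := by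
                simp only [rel, if_pos rfl]
                rw [hc, dotProduct_single, mul_one, zero_add, one_mul]
                exact hi
              have hH := key l (Pi.single i 1) 1 (le_refl l)
                (Pi.single_nonneg.mpr zero_le_one) zero_le_one hfe
              rw [dotProduct_single, mul_one, one_mul] at hH
              have : a' ⬝ᵥ l + a' i < b' := by simpa [rel] using hH
              linarith
            rcases eq_or_lt_of_le hlam00 with h0 | h0
            · obtain ⟨k, lam, hk, ha'k, hmin⟩ := exists_lammin a a' hj
              have hlampos : 0 < lam := by nlinarith [hjneg k hk, hk, ha'k]
              refine ⟨lam, hlampos.le, hfeasgen lam (by linarith) hmin,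
                Or.inr (Or.inr ⟨rfl, rfl, Or.inr ⟨?_, hlampos⟩⟩)⟩
              rw [hval, hc, mul_zero]; linarith
            · refine ⟨lam0, hlam00, hfeas0,
                Or.inr (Or.inr ⟨rfl, rfl, Or.inr ⟨?_, h0⟩⟩)⟩
              rw [hval, hc, mul_zero]; linarith
    · -- c > 0
      have hx0le : a ⬝ᵥ x₀ ≤ 0 := rel_le hx₀r
      have hdneg : a ⬝ᵥ (x₀ - l) < 0 := by rw [dotProduct_sub]; linarith
      obtain ⟨j, hj⟩ := exists_neg_comp (sub_nonneg.mpr hx₀l) hdneg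
      obtain ⟨k, lam, hk, ha'k, hmin⟩ := exists_lammin a a' hj
      have hgelam0 : lam0 ≤ lam := by nlinarith [hneglam0 k hk, hk, ha'k]
      have hfeas : a' ≤ lam • a := hfeasgen lam hgelam0 hmin
      have hlamnn : 0 ≤ lam := le_trans hlam00 hgelam0
      have hakne : a k ≠ 0 := ne_of_lt hk
      set t1 : ℝ := (-(a ⬝ᵥ l)) / a k with ht1def
      have ht1pos : 0 < t1 := div_pos_of_neg_of_neg (by linarith) hk
      have hsum : a ⬝ᵥ l + t1 * a k = 0 := by rw [ht1def]; field_simp; ring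
      have hkey2 : a' ⬝ᵥ l + t1 * a' k = a' ⬝ᵥ l - lam * (a ⬝ᵥ l) := by
        rw [ha'k, ht1def]; field_simp; ring
      have hptt : ∀ t : ℝ, 0 ≤ t → rel s (a ⬝ᵥ l + t * a k) 0 →
          rel s' (a' ⬝ᵥ l + t * a' k) b' := by
        intro t ht hr
        have h1 := key l (Pi.single k 1) t (le_refl l)
          (Pi.single_nonneg.mpr zero_le_one) ht
          (by rwa [dotProduct_single, mul_one])
        rwa [dotProduct_single, mul_one] at h1
      cases s with
      | false =>
        have hH := hptt t1 ht1pos.le (by rw [hsum]; simp [rel])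
        rw [hkey2] at hH
        refine ⟨lam, hlamnn, hfeas, ?_⟩
        cases s' with
        | false => exact Or.inl ⟨rfl, by rw [hval]; linarith [rel_le hH]⟩
        | true =>
          have hlt : a' ⬝ᵥ l - lam * (a ⬝ᵥ l) < b' := by simpa [rel] using hH
          exact Or.inr (Or.inl ⟨rfl, rfl, by rw [hval]; linarith⟩)
      | true =>
        have hub : a' ⬝ᵥ l - lam * (a ⬝ᵥ l) ≤ b' := by
          apply tool2 (v := t1 * a' k)
          intro ε hε0 hε1
          have hfe : rel true (a ⬝ᵥ l + ((1 + ε) * t1) * a k) 0 := by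
            have heq3 : a ⬝ᵥ l + ((1 + ε) * t1) * a k = -(ε * (a ⬝ᵥ l)) := by
              rw [ht1def]; field_simp; ring
            rw [heq3]
            simp only [rel, if_pos rfl, neg_lt_zero]
            exact mul_pos hε0 hc
          have hH := hptt ((1 + ε) * t1) (by nlinarith) hfe
          have heq4 : a' ⬝ᵥ l + ((1 + ε) * t1) * a' k =
              (a' ⬝ᵥ l + t1 * a' k) + ε * (t1 * a' k) := by ring
          rw [heq4, hkey2] at hH
          exact rel_le hH
        refine ⟨lam, hlamnn, hfeas, ?_⟩
        cases s' with
        | false => exact Or.inl ⟨rfl, by rw [hval]; linarith⟩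
        | true =>
          rcases lt_or_eq_of_le hub with hlt | heq
          · exact Or.inr (Or.inr ⟨rfl, rfl, Or.inl (by rw [hval]; linarith)⟩)
          · have hlampos : 0 < lam := by
              rcases eq_or_lt_of_le hlamnn with h0 | h0
              · exfalso
                have ha'k0 : a' k = 0 := by rw [ha'k, ← h0, zero_mul]
                have hfe : rel true (a ⬝ᵥ l + (2 * t1) * a k) 0 := by
                  have heq5 : a ⬝ᵥ l + (2 * t1) * a k = -(a ⬝ᵥ l) := by
                    rw [ht1def]; field_simp; ring
                  rw [heq5]
                  simp only [rel, if_pos rfl, neg_lt_zero]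
                  exact hc
                have hH := hptt (2 * t1) (by linarith) hfe
                rw [ha'k0, mul_zero, add_zero] at hH
                have hlt2 : a' ⬝ᵥ l < b' := by simpa [rel] using hH
                rw [← h0] at heq
                simp at heq
                linarith
              · exact h0
            exact Or.inr (Or.inr ⟨rfl, rfl, Or.inr ⟨by rw [hval]; linarith, hlampos⟩⟩)
  · -- backward direction
    rintro ⟨lam, hlam, hfe, hcase⟩ x ⟨hxl, hxr⟩
    have hax : a ⬝ᵥ x ≤ 0 := rel_le hxr
    have hkey : a' ⬝ᵥ x ≤ lam * (a ⬝ᵥ x) - (lam • a - a') ⬝ᵥ l := by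
      have h1 : (lam • a - a') ⬝ᵥ l ≤ (lam • a - a') ⬝ᵥ x :=
        dot_mono (sub_nonneg.mpr hfe) hxl
      have h2 : (lam • a - a') ⬝ᵥ x = lam * (a ⬝ᵥ x) - a' ⬝ᵥ x := by
        rw [sub_dotProduct, smul_dotProduct, smul_eq_mul]
      linarith
    have hlax : lam * (a ⬝ᵥ x) ≤ 0 := mul_nonpos_iff.mpr (Or.inl ⟨hlam, hax⟩)
    show rel s' (a' ⬝ᵥ x) b'
    rcases hcase with ⟨hs', hD⟩ | ⟨hs, hs', hD⟩ | ⟨hs, hs', hD⟩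
    · subst hs'; rw [rel_false]
      linarith
    · subst hs'; rw [rel_true]
      linarith
    · subst hs; subst hs'
      have hax' : a ⬝ᵥ x < 0 := by simpa [rel] using hxr
      rw [rel_true]
      rcases hD with hD | ⟨hD, hlampos⟩
      · linarith
      · have : lam * (a ⬝ᵥ x) < 0 := mul_neg_of_pos_of_neg hlampos hax'
        linarith
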